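/- arXiv:2004.01122 — 2 statements merged into one kernel-verified Lean document; each statement's English description precedes it below -/
import Mathlib

section
/- Soundness of the Rot-Couple code-transformation rule (single-gadget case of Theorem 6.1): for every n ≥ 1, every Hermitian involutory n×n complex matrix σ (σᴴ = σ and σ·σ = 1ₙ), every n×n complex matrices O and ρ, and every θ ∈ ℝ, the ancilla-observable expectation of the gadget equals the derivative of the observable semantics of the rotation gate: trace((Z_A ⊗ O) · R′_σ(θ) · (e00 ⊗ ρ) · (R′_σ(θ))ᴴ) = deriv (fun t : ℝ => trace(O · R_σ(t) · ρ · (R_σ(t))ᴴ)) θ, where the derivative is of the ℂ-valued function of the real variable t. -/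
open Matrix Kronecker Complex

/-- The parameterized rotation gate `R_σ(θ) = cos(θ/2) • 1 − (i·sin(θ/2)) • σ`. -/
noncomputable def Rgate {n : ℕ} (σ : Matrix (Fin n) (Fin n) ℂ) (θ : ℝ) :
    Matrix (Fin n) (Fin n) ℂ :=
  (Real.cos (θ / 2) : ℂ) • (1 : Matrix (Fin n) (Fin n) ℂ)
    - (Complex.I * (Real.sin (θ / 2) : ℂ)) • σ

/-- `|0⟩⟨0|`. -/
def e00 : Matrix (Fin 2) (Fin 2) ℂ := !![1, 0; 0, 0]

/-- `|1⟩⟨1|`. -/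
def e11 : Matrix (Fin 2) (Fin 2) ℂ := !![0, 0; 0, 1]

/-- The Hadamard matrix. -/
noncomputable def Hmat : Matrix (Fin 2) (Fin 2) ℂ :=
  ((1 / Real.sqrt 2 : ℝ) : ℂ) • !![1, 1; 1, -1]

/-- The Pauli-Z ancilla observable. -/
def ZA : Matrix (Fin 2) (Fin 2) ℂ := !![1, 0; 0, -1]

/-- The controlled rotation `C_Rσ(θ) = |0⟩⟨0| ⊗ R_σ(θ) + |1⟩⟨1| ⊗ R_σ(θ+π)`. -/
noncomputable def CR {n : ℕ} (σ : Matrix (Fin n) (Fin n) ℂ) (θ : ℝ) :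
    Matrix (Fin 2 × Fin n) (Fin 2 × Fin n) ℂ :=
  e00 ⊗ₖ Rgate σ θ + e11 ⊗ₖ Rgate σ (θ + Real.pi)

/-- The differentiation gadget `R′_σ(θ) = (H ⊗ 1) C_Rσ(θ) (H ⊗ 1)`. -/
noncomputable def Rgadget {n : ℕ} (σ : Matrix (Fin n) (Fin n) ℂ) (θ : ℝ) :
    Matrix (Fin 2 × Fin n) (Fin 2 × Fin n) ℂ :=
  (Hmat ⊗ₖ (1 : Matrix (Fin n) (Fin n) ℂ)) * CR σ θ
    * (Hmat ⊗ₖ (1 : Matrix (Fin n) (Fin n) ℂ))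

/- ### Auxiliary lemmas -/

lemma kron_conjT {l m p q : Type*} (A : Matrix l m ℂ) (B : Matrix p q ℂ) :
    (A ⊗ₖ B)ᴴ = Aᴴ ⊗ₖ Bᴴ := by
  ext ⟨i, j⟩ ⟨k, l⟩
  simp [conjTranspose_apply, kroneckerMap_apply]

lemma hsq : ((1 / Real.sqrt 2 : ℝ) : ℂ) * ((1 / Real.sqrt 2 : ℝ) : ℂ) = 1/2 := by
  rw [← Complex.ofReal_mul, div_mul_div_comm, Real.mul_self_sqrt (by norm_num)]
  norm_num

lemma He00H : Hmat * e00 * Hmat = (1/2 : ℂ) • !![1,1;1,1] := by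
  rw [Hmat, e00, Matrix.smul_mul, Matrix.smul_mul, Matrix.mul_smul, smul_smul, hsq]
  congr 1
  norm_num [Matrix.mul_fin_two]

lemma He11H : Hmat * e11 * Hmat = (1/2 : ℂ) • !![1,-1;-1,1] := by
  rw [Hmat, e11, Matrix.smul_mul, Matrix.smul_mul, Matrix.mul_smul, smul_smul, hsq]
  congr 1
  norm_num [Matrix.mul_fin_two]

lemma Pconj : (!![1,1;1,1] : Matrix (Fin 2) (Fin 2) ℂ)ᴴ = !![1,1;1,1] := by
  ext i j; fin_cases i <;> fin_cases j <;> simp [conjTranspose_apply]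

lemma Qconj : (!![1,-1;-1,1] : Matrix (Fin 2) (Fin 2) ℂ)ᴴ = !![1,-1;-1,1] := by
  ext i j; fin_cases i <;> fin_cases j <;> simp [conjTranspose_apply]

lemma Rgadget_eq {n : ℕ} (σ : Matrix (Fin n) (Fin n) ℂ) (θ : ℝ) :
    Rgadget σ θ = (1/2 : ℂ) • (!![1,1;1,1] ⊗ₖ Rgate σ θ)
      + (1/2 : ℂ) • (!![1,-1;-1,1] ⊗ₖ Rgate σ (θ + Real.pi)) := by
  rw [Rgadget, CR, Matrix.mul_add, Matrix.add_mul, ← mul_kronecker_mul, ← mul_kronecker_mul,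
    ← mul_kronecker_mul, ← mul_kronecker_mul, Matrix.one_mul, Matrix.one_mul, Matrix.mul_one,
    Matrix.mul_one, He00H, He11H, smul_kronecker, smul_kronecker]

lemma trace_expand {n : ℕ} (σ O ρ : Matrix (Fin n) (Fin n) ℂ) (a b a' b' : ℂ) :
    (O * (a • (1 : Matrix (Fin n) (Fin n) ℂ) - b • σ) * ρ
        * (a' • (1 : Matrix (Fin n) (Fin n) ℂ) + b' • σ)).trace
      = a * a' * (O * ρ).trace + a * b' * (O * (ρ * σ)).trace
        - b * a' * (O * (σ * ρ)).trace - b * b' * (O * (σ * (ρ * σ))).trace := by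
  simp only [Matrix.mul_sub, Matrix.mul_add, Matrix.sub_mul, Matrix.add_mul,
    Matrix.mul_smul, Matrix.smul_mul, Matrix.mul_one, Matrix.one_mul,
    trace_add, trace_sub, trace_smul, smul_smul, smul_eq_mul, Matrix.mul_assoc]
  ring

lemma Rgate_conjT {n : ℕ} {σ : Matrix (Fin n) (Fin n) ℂ} (hσH : σᴴ = σ) (t : ℝ) :
    (Rgate σ t)ᴴ = (Real.cos (t / 2) : ℂ) • (1 : Matrix (Fin n) (Fin n) ℂ)
      + (Complex.I * (Real.sin (t / 2) : ℂ)) • σ := by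
  rw [Rgate, conjTranspose_sub, conjTranspose_smul, conjTranspose_smul, conjTranspose_one,
    hσH]
  rw [sub_eq_add_neg, ← neg_smul]
  congr 1
  · congr 1
    rw [Complex.star_def, Complex.conj_ofReal]
  · congr 1
    rw [Complex.star_def, _root_.map_mul, Complex.conj_I, Complex.conj_ofReal]
    ring

lemma Rgate_shift {n : ℕ} (σ : Matrix (Fin n) (Fin n) ℂ) (θ : ℝ) :
    Rgate σ (θ + Real.pi) = (-(Real.sin (θ / 2) : ℝ) : ℂ) • (1 : Matrix (Fin n) (Fin n) ℂ)
      - (Complex.I * (Real.cos (θ / 2) : ℂ)) • σ := by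
  have h : (θ + Real.pi) / 2 = θ / 2 + Real.pi / 2 := by ring
  rw [Rgate, h, Real.cos_add_pi_div_two, Real.sin_add_pi_div_two]
  push_cast
  ring_nf

/-- Soundness of the Rot-Couple code-transformation rule (single-gadget case):
the ancilla-observable expectation of the gadget equals the derivative of the
observable semantics of the rotation gate. -/
theorem rot_couple_sound (n : ℕ) (hn : 1 ≤ n)
    (σ O ρ : Matrix (Fin n) (Fin n) ℂ)
    (hσH : σᴴ = σ) (hσ2 : σ * σ = 1) (θ : ℝ) :
    ((ZA ⊗ₖ O) * Rgadget σ θ * (e00 ⊗ₖ ρ) * (Rgadget σ θ)ᴴ).trace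
      = deriv (fun t : ℝ => ((O * Rgate σ t * ρ * (Rgate σ t)ᴴ).trace)) θ := by
  have hfun : (fun t : ℝ => ((O * Rgate σ t * ρ * (Rgate σ t)ᴴ).trace))
      = fun t : ℝ => (Real.cos (t/2) : ℂ) * (Real.cos (t/2) : ℂ) * (O * ρ).trace
        + (Real.cos (t/2) : ℂ) * (Complex.I * (Real.sin (t/2) : ℂ)) * (O * (ρ * σ)).trace
        - (Complex.I * (Real.sin (t/2) : ℂ)) * (Real.cos (t/2) : ℂ) * (O * (σ * ρ)).trace
        - (Complex.I * (Real.sin (t/2) : ℂ)) * (Complex.I * (Real.sin (t/2) : ℂ))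
            * (O * (σ * (ρ * σ))).trace := by
    funext t
    rw [Rgate_conjT hσH, Rgate, trace_expand]
  have hCd : HasDerivAt (fun t : ℝ => ((Real.cos (t/2) : ℝ) : ℂ))
      ((-Real.sin (θ/2) * (1/2) : ℝ) : ℂ) θ :=
    by have h := (((Real.hasDerivAt_cos (θ/2)).comp θ ((hasDerivAt_id θ).div_const 2))).ofReal_comp; exact h
  have hSd : HasDerivAt (fun t : ℝ => ((Real.sin (t/2) : ℝ) : ℂ))
      ((Real.cos (θ/2) * (1/2) : ℝ) : ℂ) θ :=
    by have h := (((Real.hasDerivAt_sin (θ/2)).comp θ ((hasDerivAt_id θ).div_const 2))).ofReal_comp; exact h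
  have hderiv := ((((hCd.mul hCd).mul_const ((O * ρ).trace)).add
      ((hCd.mul ((hSd.const_mul Complex.I))).mul_const ((O * (ρ * σ)).trace))).sub
      (((hSd.const_mul Complex.I).mul hCd).mul_const ((O * (σ * ρ)).trace))).sub
      (((hSd.const_mul Complex.I).mul (hSd.const_mul Complex.I)).mul_const
        ((O * (σ * (ρ * σ))).trace))
  erw [hfun, hderiv.deriv]
  rw [Rgadget_eq]
  rw [conjTranspose_add, conjTranspose_smul, conjTranspose_smul, kron_conjT, kron_conjT,
    Pconj, Qconj]
  simp only [Matrix.mul_add, Matrix.add_mul, Matrix.smul_mul, Matrix.mul_smul,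
    ← mul_kronecker_mul, trace_add, trace_smul, trace_kronecker, smul_eq_mul]
  have e1 : (ZA * !![1,1;1,1] * e00 * !![1,1;1,1]).trace = 0 := by
    norm_num [ZA, e00, Matrix.mul_fin_two, Matrix.trace_fin_two_of]
  have e2 : (ZA * !![1,1;1,1] * e00 * !![1,-1;-1,1]).trace = 2 := by
    norm_num [ZA, e00, Matrix.mul_fin_two, Matrix.trace_fin_two_of]
  have e3 : (ZA * !![1,-1;-1,1] * e00 * !![1,1;1,1]).trace = 2 := by
    norm_num [ZA, e00, Matrix.mul_fin_two, Matrix.trace_fin_two_of]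
  have e4 : (ZA * !![1,-1;-1,1] * e00 * !![1,-1;-1,1]).trace = 0 := by
    norm_num [ZA, e00, Matrix.mul_fin_two, Matrix.trace_fin_two_of]
  rw [e1, e2, e3, e4]
  have hst : star (1/2 : ℂ) = 1/2 := by simp
  rw [hst]
  rw [Rgate_conjT hσH, Rgate_conjT hσH, Rgate_shift, Rgate]
  rw [trace_expand, trace_expand, trace_expand, trace_expand]
  have h2 : ((θ + Real.pi)/2 : ℝ) = θ/2 + Real.pi/2 := by ring
  rw [h2, Real.cos_add_pi_div_two, Real.sin_add_pi_div_two]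
  push_cast
  ring
end

section
/- Closed form for the derivative of the observable semantics of a rotation gate (Lemma C.1(iii)): for every n×n complex matrices σ, O, ρ and every θ ∈ ℝ, deriv (fun t : ℝ => trace(O · R_σ(t) · ρ · (R_σ(t))ᴴ)) θ = (1/2) · trace(O · (R_σ(θ) · ρ · (R_σ(θ+π))ᴴ + R_σ(θ+π) · ρ · (R_σ(θ))ᴴ)). -/
open Matrix Kronecker Complex

lemma tr_expand (n : ℕ) (σ O ρ : Matrix (Fin n) (Fin n) ℂ) (c1 d1 c2 d2 : ℂ) :
    (O * (c1 • 1 - d1 • σ) * ρ * (c2 • (1 : Matrix (Fin n) (Fin n) ℂ) - d2 • σ)ᴴ).trace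
      = c1 * star c2 * (O * ρ).trace - c1 * star d2 * (O * ρ * σᴴ).trace
        - d1 * star c2 * (O * σ * ρ).trace + d1 * star d2 * (O * σ * ρ * σᴴ).trace := by
  simp [Matrix.mul_sub, Matrix.sub_mul, Matrix.conjTranspose_sub, Matrix.conjTranspose_smul,
    Matrix.smul_mul, Matrix.mul_smul, Matrix.mul_assoc, Matrix.trace_sub, Matrix.trace_smul,
    smul_smul]
  ring


/-- Closed form for the derivative of the observable semantics of a rotation gate
(Lemma C.1(iii)). -/
theorem rotation_obs_deriv_closed_form (n : ℕ) (σ O ρ : Matrix (Fin n) (Fin n) ℂ) (θ : ℝ) :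
    deriv (fun t : ℝ => (O * Rgate σ t * ρ * (Rgate σ t)ᴴ).trace) θ
      = (1 / 2 : ℂ) * (O * (Rgate σ θ * ρ * (Rgate σ (θ + Real.pi))ᴴ
          + Rgate σ (θ + Real.pi) * ρ * (Rgate σ θ)ᴴ)).trace := by
  set A := (O * ρ).trace with hA
  set B := (O * ρ * σᴴ).trace with hB
  set C := (O * σ * ρ).trace with hC
  set D := (O * σ * ρ * σᴴ).trace with hD
  have hfun : (fun t : ℝ => (O * Rgate σ t * ρ * (Rgate σ t)ᴴ).trace)
      = fun t : ℝ => ((Real.cos (t / 2) : ℂ)) ^ 2 * A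
          + Complex.I * ((Real.cos (t / 2) : ℂ) * (Real.sin (t / 2) : ℂ)) * (B - C)
          + ((Real.sin (t / 2) : ℂ)) ^ 2 * D := by
    funext t
    rw [Rgate, tr_expand]
    simp only [Complex.star_def, _root_.map_mul, Complex.conj_I, Complex.conj_ofReal,
      ← hA, ← hB, ← hC, ← hD]
    linear_combination (-(Real.sin (t / 2) : ℂ) ^ 2 * D) * Complex.I_sq
  have hc : HasDerivAt (fun t : ℝ => Real.cos (t / 2)) (-Real.sin (θ / 2) * (1 / 2)) θ :=
    by have := (Real.hasDerivAt_cos (θ / 2)).comp θ ((hasDerivAt_id θ).div_const 2); exact this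
  have hs : HasDerivAt (fun t : ℝ => Real.sin (t / 2)) (Real.cos (θ / 2) * (1 / 2)) θ :=
    by have := (Real.hasDerivAt_sin (θ / 2)).comp θ ((hasDerivAt_id θ).div_const 2); exact this
  have hcC : HasDerivAt (fun t : ℝ => ((Real.cos (t / 2) : ℂ)))
      ((-Real.sin (θ / 2) * (1 / 2) : ℝ) : ℂ) θ := hc.ofReal_comp
  have hsC : HasDerivAt (fun t : ℝ => ((Real.sin (t / 2) : ℂ)))
      ((Real.cos (θ / 2) * (1 / 2) : ℝ) : ℂ) θ := hs.ofReal_comp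
  have h1 : HasDerivAt (fun t : ℝ => ((Real.cos (t / 2) : ℂ)) ^ 2 * A)
      ((((-Real.sin (θ / 2) * (1 / 2) : ℝ) : ℂ) * (Real.cos (θ / 2) : ℂ)
        + (Real.cos (θ / 2) : ℂ) * ((-Real.sin (θ / 2) * (1 / 2) : ℝ) : ℂ)) * A) θ := by
    simpa [sq] using (hcC.mul hcC).mul_const A
  have h2 : HasDerivAt
      (fun t : ℝ => Complex.I * ((Real.cos (t / 2) : ℂ) * (Real.sin (t / 2) : ℂ)) * (B - C))
      ((Complex.I * (((-Real.sin (θ / 2) * (1 / 2) : ℝ) : ℂ) * (Real.sin (θ / 2) : ℂ)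
          + (Real.cos (θ / 2) : ℂ) * ((Real.cos (θ / 2) * (1 / 2) : ℝ) : ℂ))) * (B - C)) θ :=
    ((hcC.mul hsC).const_mul Complex.I).mul_const (B - C)
  have h3 : HasDerivAt (fun t : ℝ => ((Real.sin (t / 2) : ℂ)) ^ 2 * D)
      ((((Real.cos (θ / 2) * (1 / 2) : ℝ) : ℂ) * (Real.sin (θ / 2) : ℂ)
        + (Real.sin (θ / 2) : ℂ) * ((Real.cos (θ / 2) * (1 / 2) : ℝ) : ℂ)) * D) θ := by
    simpa [sq] using (hsC.mul hsC).mul_const D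
  have hg := (h1.add h2).add h3
  simp only [Pi.add_def] at hg
  rw [hfun, hg.deriv]
  have e1 : Real.cos ((θ + Real.pi) / 2) = -Real.sin (θ / 2) := by
    rw [show (θ + Real.pi) / 2 = θ / 2 + Real.pi / 2 by ring, Real.cos_add_pi_div_two]
  have e2 : Real.sin ((θ + Real.pi) / 2) = Real.cos (θ / 2) := by
    rw [show (θ + Real.pi) / 2 = θ / 2 + Real.pi / 2 by ring, Real.sin_add_pi_div_two]
  simp only [Rgate, Matrix.mul_add, Matrix.trace_add, ← Matrix.mul_assoc, tr_expand, e1, e2,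
    Complex.star_def, _root_.map_mul, Complex.conj_I, Complex.conj_ofReal,
    ← hA, ← hB, ← hC, ← hD]
  push_cast
  linear_combination (Complex.sin ((θ : ℂ) / 2) * Complex.cos ((θ : ℂ) / 2) * D) * Complex.I_sq
end
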